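/- Let G be a graph with a bramble B, and let S and T be subsets of V(G) such that both B_S (the elements of B meeting S) and B_T (the elements of B meeting T) have order at least ℓ. Then G contains ℓ pairwise vertex-disjoint paths each having one endpoint in S and one endpoint in T. -/

import Mathlib

open SimpleGraph

variable {V : Type*}

/-- A bramble: a family of vertex sets, each inducing a connected subgraph,
pairwise intersecting or joined by an edge. -/
def IsBramble (G : SimpleGraph V) (B : Set (Set V)) : Prop :=
  (∀ S ∈ B, S.Nonempty ∧ (G.induce S).Connected) ∧
  (∀ S ∈ B, ∀ T ∈ B, (S ∩ T).Nonempty ∨ ∃ u ∈ S, ∃ v ∈ T, G.Adj u v)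

/-- `X` hits every element of the family `B`. -/
def HitsAll (B : Set (Set V)) (X : Set V) : Prop := ∀ S ∈ B, (S ∩ X).Nonempty

/-- The order of a bramble: minimum size of a hitting set. -/
noncomputable def brambleOrder (B : Set (Set V)) : ℕ :=
  sInf {n | ∃ X : Set V, X.Finite ∧ X.ncard = n ∧ HitsAll B X}

/-- The subfamily of elements of `B` meeting `X`. -/
def sub (B : Set (Set V)) (X : Set V) : Set (Set V) := {S ∈ B | (S ∩ X).Nonempty}

namespace MengerAux

attribute [local instance] Classical.propDecidable

/-- `X` separates `A` from `B` in `G`: every `A`–`B` walk meets `X`. -/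
def Sep (G : SimpleGraph V) (A B X : Set V) : Prop :=
  ∀ ⦃u v : V⦄, u ∈ A → v ∈ B → ∀ p : G.Walk u v, ∃ z ∈ X, z ∈ p.support

lemma Sep.symm {G : SimpleGraph V} {A B X : Set V} (h : Sep G A B X) : Sep G B A X := by
  intro u v hu hv p
  obtain ⟨z, hz, hzs⟩ := h hv hu p.reverse
  exact ⟨z, hz, by simpa using hzs⟩

/-- There are `k` pairwise disjoint `A`–`B` paths in `G`. -/
def Conn (G : SimpleGraph V) (A B : Set V) (k : ℕ) : Prop :=
  ∃ f : Fin k → Σ u v, G.Walk u v,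
    (∀ i, (f i).2.2.IsPath ∧ (f i).1 ∈ A ∧ (f i).2.1 ∈ B) ∧
    ∀ i j, i ≠ j → ∀ x ∈ (f i).2.2.support, x ∉ (f j).2.2.support

lemma mem_support_cons {G : SimpleGraph V} {u v w z : V} (h : G.Adj u v) (p : G.Walk v w) :
    z ∈ (Walk.cons h p).support ↔ z = u ∨ z ∈ p.support := by
  rw [Walk.support_cons]; exact List.mem_cons

lemma exists_prefix {G : SimpleGraph V} {u v : V} (P : G.Walk u v) (X : Set V)
    (h : ∃ z ∈ P.support, z ∈ X) :
    ∃ w, w ∈ X ∧ ∃ Q : G.Walk u w, (∀ z ∈ Q.support, z ∈ P.support) ∧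
      (∀ z ∈ Q.support, z ∈ X → z = w) ∧ (P.IsPath → Q.IsPath) := by
  induction P with
  | nil =>
    rename_i a
    refine ⟨a, by simpa using h, Walk.nil, by simp, ?_, fun _ => Walk.IsPath.nil⟩
    intro z hz _; simpa using hz
  | @cons a c v h' P' ih =>
    by_cases ha : a ∈ X
    · refine ⟨a, ha, Walk.nil, by simp, ?_, fun _ => Walk.IsPath.nil⟩
      intro z hz _; simpa using hz
    · have h2 : ∃ z ∈ P'.support, z ∈ X := by
        obtain ⟨z, hz, hzX⟩ := h
        rcases ((mem_support_cons _ _).1 hz) with rfl | hz'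
        · exact absurd hzX ha
        · exact ⟨z, hz', hzX⟩
      obtain ⟨w, hwX, Q', hsub, honce, hpath⟩ := ih h2
      refine ⟨w, hwX, Walk.cons h' Q', ?_, ?_, ?_⟩
      · intro z hz
        rcases (mem_support_cons _ _).1 hz with rfl | hz'
        · exact Walk.start_mem_support _
        · exact (mem_support_cons _ _).2 (Or.inr (hsub z hz'))
      · intro z hz hzX
        rcases (mem_support_cons _ _).1 hz with rfl | hz'
        · exact absurd hzX ha
        · exact honce z hz' hzX
      · intro hP
        rw [Walk.cons_isPath_iff] at hP ⊢
        exact ⟨hpath hP.1, fun hc => hP.2 (hsub a hc)⟩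

lemma exists_avoid {G : SimpleGraph V} {u w : V} (P : G.Walk u w) (hP : P.IsPath) (X : Set V)
    (hw : ∀ z ∈ P.support, z ∈ X → z = w) {z : V} (hz : z ∈ P.support) (hzX : z ∉ X) :
    ∃ Q : G.Walk u z, (∀ t ∈ Q.support, t ∈ P.support) ∧ ∀ t ∈ Q.support, t ∉ X := by
  induction P with
  | nil =>
    rename_i a
    simp only [Walk.support_nil, List.mem_singleton] at hz
    subst hz
    exact ⟨Walk.nil, by simp, by intro t ht; simp at ht; subst ht; exact hzX⟩
  | @cons a c v h' P' ih =>
    have haX : a ∉ X := by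
      intro haX
      have := hw a (Walk.start_mem_support _) haX
      subst this
      rw [Walk.cons_isPath_iff] at hP
      exact hP.2 (Walk.end_mem_support _)
    by_cases hza : z = a
    · subst hza
      exact ⟨Walk.nil, by simp, by intro t ht; simp at ht; subst ht; exact hzX⟩
    · have hz' : z ∈ P'.support := by
        rcases (mem_support_cons _ _).1 hz with rfl | hz'
        · exact absurd rfl hza
        · exact hz'
      rw [Walk.cons_isPath_iff] at hP
      obtain ⟨Q', hsub, havoid⟩ := ih hP.1
        (fun t ht htX => hw t ((mem_support_cons _ _).2 (Or.inr ht)) htX) hz'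
      refine ⟨Walk.cons h' Q', ?_, ?_⟩
      · intro t ht
        rcases (mem_support_cons _ _).1 ht with rfl | ht'
        · exact Walk.start_mem_support _
        · exact (mem_support_cons _ _).2 (Or.inr (hsub t ht'))
      · intro t ht
        rcases (mem_support_cons _ _).1 ht with rfl | ht'
        · exact haX
        · exact havoid t ht'


/-! ### Contraction -/

/-- `y` collapsed onto `x`. -/
noncomputable def g (x y : V) : V → V := fun z => if z = y then x else z

lemma g_ne_y {x y : V} (hxy : x ≠ y) (z : V) : g x y z ≠ y := by
  unfold g; split
  · exact hxy
  · assumption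

lemma g_eq_iff {x y a' a : V} : g x y a' = a ↔ (a' = a ∧ a' ≠ y) ∨ (a' = y ∧ a = x) := by
  unfold g; split <;> simp_all [eq_comm]

lemma g_fixed {x y a : V} (ha : a ≠ y) : g x y a = a := by unfold g; simp [ha]

/-- Contraction of the edge `xy`, with `y` made isolated. -/
def contract (G : SimpleGraph V) (x y : V) : SimpleGraph V where
  Adj a b := a ≠ b ∧ a ≠ y ∧ b ≠ y ∧ ∃ a' b', G.Adj a' b' ∧ g x y a' = a ∧ g x y b' = b
  symm := by
    refine ⟨?_⟩; rintro a b ⟨h1, h2, h3, a', b', hadj, ha, hb⟩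
    exact ⟨h1.symm, h3, h2, b', a', hadj.symm, hb, ha⟩
  loopless := ⟨fun a h => h.1 rfl⟩

/-- Projection of a walk to the contraction. -/
lemma project {G : SimpleGraph V} {x y : V} (hxy : x ≠ y) {u v : V} (P : G.Walk u v) :
    ∃ Q : (contract G x y).Walk (g x y u) (g x y v),
      ∀ z ∈ Q.support, ∃ t ∈ P.support, g x y t = z := by
  induction P with
  | nil =>
    rename_i a
    exact ⟨Walk.nil, by intro z hz; simp at hz; exact ⟨a, by simp, hz.symm⟩⟩
  | @cons a c v h' P' ih =>
    obtain ⟨Q', hQ'⟩ := ih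
    by_cases hgc : g x y a = g x y c
    · refine ⟨Q'.copy hgc.symm rfl, ?_⟩
      intro z hz
      rw [Walk.support_copy] at hz
      obtain ⟨t, ht, hgt⟩ := hQ' z hz
      exact ⟨t, (mem_support_cons _ _).2 (Or.inr ht), hgt⟩
    · have hadj : (contract G x y).Adj (g x y a) (g x y c) :=
        ⟨hgc, g_ne_y hxy a, g_ne_y hxy c, a, c, h', rfl, rfl⟩
      refine ⟨Walk.cons hadj Q', ?_⟩
      intro z hz
      rcases (mem_support_cons _ _).1 hz with rfl | hz'
      · exact ⟨a, Walk.start_mem_support _, rfl⟩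
      · obtain ⟨t, ht, hgt⟩ := hQ' z hz'
        exact ⟨t, (mem_support_cons _ _).2 (Or.inr ht), hgt⟩

lemma preimage_cases {x y a' a₀ : V} (hxy : x ≠ y) (hne : a' ≠ a₀)
    (h : g x y a' = g x y a₀) : (a' = x ∧ a₀ = y) ∨ (a' = y ∧ a₀ = x) := by
  by_cases h1 : a' = y <;> by_cases h2 : a₀ = y
  · exact absurd (h1.trans h2.symm) hne
  · simp [g, h1, h2] at h; tauto
  · simp [g, h1, h2] at h; tauto
  · simp [g, h1, h2] at h; exact absurd h hne

/-- Lifting a walk from the contraction back to `G`. -/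
lemma lift {G : SimpleGraph V} {x y : V} (hxy : G.Adj x y) {a b : V}
    (p : (contract G x y).Walk a b) :
    ∀ a' : V, g x y a' = a →
    ∃ b' : V, g x y b' = b ∧ ∃ q : G.Walk a' b', ∀ z ∈ q.support, g x y z ∈ p.support := by
  induction p with
  | nil =>
    intro a' ha
    exact ⟨a', ha, Walk.nil, by intro z hz; simp at hz; subst hz; simp [ha]⟩
  | @cons a c b h p' ih =>
    intro a' ha
    obtain ⟨hne, hay, hcy, a₀, c₀, hadj₀, ha₀, hc₀⟩ := h
    obtain ⟨b', hb', q', hq'⟩ := ih c₀ hc₀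
    by_cases haa : a' = a₀
    · subst haa
      refine ⟨b', hb', Walk.cons hadj₀ q', ?_⟩
      intro z hz
      rcases (mem_support_cons _ _).1 hz with rfl | hz'
      · exact (mem_support_cons _ _).2 (Or.inl ha)
      · exact (mem_support_cons _ _).2 (Or.inr (hq' z hz'))
    · have hcase := preimage_cases hxy.ne haa (by rw [ha, ha₀])
      have hadj' : G.Adj a' a₀ := by
        rcases hcase with ⟨h1, h2⟩ | ⟨h1, h2⟩
        · subst h1; subst h2; exact hxy
        · subst h1; subst h2; exact hxy.symm
      refine ⟨b', hb', Walk.cons hadj' (Walk.cons hadj₀ q'), ?_⟩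
      intro z hz
      rcases (mem_support_cons _ _).1 hz with rfl | hz'
      · exact (mem_support_cons _ _).2 (Or.inl ha)
      · rcases (mem_support_cons _ _).1 hz' with rfl | hz''
        · exact (mem_support_cons _ _).2 (Or.inl ha₀)
        · exact (mem_support_cons _ _).2 (Or.inr (hq' z hz''))


/-! ### Edge-pair measure -/

variable [Fintype V]

/-- Number of ordered adjacent pairs. -/
noncomputable def m (G : SimpleGraph V) : ℕ :=
  (Finset.univ.filter fun p : V × V => G.Adj p.1 p.2).card

lemma m_deleteEdges_lt {G : SimpleGraph V} {x y : V} (hxy : G.Adj x y) :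
    m (G.deleteEdges {s(x, y)}) < m G := by
  apply Finset.card_lt_card
  constructor
  · intro p hp
    simp only [Finset.mem_filter, Finset.mem_univ, true_and] at hp ⊢
    exact (SimpleGraph.deleteEdges_adj.1 hp).1
  · intro hsub
    have h1 : (x, y) ∈ Finset.univ.filter fun p : V × V => G.Adj p.1 p.2 := by
      simp [hxy]
    have h2 := hsub h1
    simp only [Finset.mem_filter, Finset.mem_univ, true_and,
      SimpleGraph.deleteEdges_adj] at h2
    exact h2.2 rfl

lemma g_y {x y : V} : g x y y = x := by unfold g; simp

lemma m_contract_lt {G : SimpleGraph V} {x y : V} (hxy : G.Adj x y) :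
    m (contract G x y) < m G := by
  classical
  set φ : V × V → V × V := fun p => if G.Adj p.1 p.2 then p else
    if p.1 = x then (y, p.2) else (p.1, y) with hφ
  have key : ∀ p ∈ (Finset.univ.filter fun p : V × V => (contract G x y).Adj p.1 p.2),
      (G.Adj (φ p).1 (φ p).2 ∧ φ p ≠ (x, y)) ∧ (g x y (φ p).1, g x y (φ p).2) = p := by
    rintro ⟨a, b⟩ hp
    simp only [Finset.mem_filter, Finset.mem_univ, true_and] at hp
    obtain ⟨hne, hay, hby, a', b', hadj, ha', hb'⟩ := hp
    by_cases H : G.Adj a b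
    · refine ⟨⟨by simp [hφ, H], ?_⟩, by simp [hφ, H, g_fixed hay, g_fixed hby]⟩
      simp only [hφ, H, if_pos]
      intro hc
      exact hby (congrArg Prod.snd hc)
    · by_cases hax : a = x
      · have hbx : b ≠ x := fun h => hne (hax.trans h.symm)
        have hb : b' = b := by
          rcases g_eq_iff.1 hb' with ⟨h1, _⟩ | ⟨_, h2⟩
          · exact h1
          · exact absurd h2 hbx
        rw [hb] at hadj
        rw [hax] at H
        have hyb : G.Adj y b := by
          rcases g_eq_iff.1 ha' with ⟨h1, _⟩ | ⟨h1, _⟩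
          · rw [h1, hax] at hadj; exact absurd hadj H
          · rw [h1] at hadj; exact hadj
        refine ⟨⟨by simp [hφ, H, hax, hyb], ?_⟩, ?_⟩
        · simp only [hφ, H, hax, ite_true, ite_false, if_pos rfl]
          intro hc
          exact hxy.ne' (congrArg Prod.fst hc)
        · simp [hφ, H, hax, g_y, g_fixed hby]
      · have ha : a' = a := by
          rcases g_eq_iff.1 ha' with ⟨h1, _⟩ | ⟨_, h2⟩
          · exact h1
          · exact absurd h2 hax
        rw [ha] at hadj
        have hb2 : b = x := by
          rcases g_eq_iff.1 hb' with ⟨h1, _⟩ | ⟨_, h2⟩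
          · rw [h1] at hadj; exact absurd hadj H
          · exact h2
        have hay2 : G.Adj a y := by
          rcases g_eq_iff.1 hb' with ⟨h1, _⟩ | ⟨h1, _⟩
          · rw [h1] at hadj; exact absurd hadj H
          · rw [h1] at hadj; exact hadj
        rw [hb2] at H
        refine ⟨⟨by simp [hφ, hb2, H, hax, hay2], ?_⟩, ?_⟩
        · simp only [hφ, hb2, H, hax, ite_false]
          intro hc
          exact hax (congrArg Prod.fst hc)
        · simp [hφ, H, hax, g_y, g_fixed hay, hb2]
  have hmaps : ∀ p ∈ (Finset.univ.filter fun p : V × V => (contract G x y).Adj p.1 p.2),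
      φ p ∈ (Finset.univ.filter fun p : V × V => G.Adj p.1 p.2).erase (x, y) := by
    intro p hp
    obtain ⟨⟨h1, h2⟩, _⟩ := key p hp
    exact Finset.mem_erase.2 ⟨h2, by simp [h1]⟩
  have hinj : Set.InjOn φ
      ((Finset.univ.filter fun p : V × V => (contract G x y).Adj p.1 p.2) : Finset (V × V)) := by
    intro p hp q hq hpq
    have k1 := (key p (by simpa using hp)).2
    have k2 := (key q (by simpa using hq)).2
    rw [← k1, ← k2, hpq]
  calc m (contract G x y)
      ≤ ((Finset.univ.filter fun p : V × V => G.Adj p.1 p.2).erase (x, y)).card :=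
        Finset.card_le_card_of_injOn φ hmaps hinj
    _ < m G := Finset.card_erase_lt_of_mem (by simp [hxy])


lemma conn_of_no_edges {G : SimpleGraph V} {A B : Set V} {k : ℕ}
    (hE : ∀ a b : V, ¬ G.Adj a b)
    (hk : ∀ X : Set V, Sep G A B X → k ≤ X.ncard) : Conn G A B k := by
  have hsep : Sep G A B (A ∩ B) := by
    intro u v hu hv p
    cases p with
    | nil => exact ⟨u, ⟨hu, hv⟩, Walk.start_mem_support _⟩
    | cons h _ => exact absurd h (hE _ _)
  obtain ⟨t, hts, htc⟩ := Set.exists_subset_card_eq (hk _ hsep)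
  haveI : Fintype t := (Set.toFinite t).fintype
  have hft : Fintype.card t = k := by
    rw [← Set.toFinset_card, ← Set.ncard_eq_toFinset_card', htc]
  let e := (Fintype.equivFinOfCardEq hft).symm
  refine ⟨fun i => ⟨(e i : V), (e i : V), Walk.nil⟩, fun i => ?_, ?_⟩
  · exact ⟨Walk.IsPath.nil, (hts (e i).2).1, (hts (e i).2).2⟩
  · intro i j hij z hzi hzj
    simp only [Walk.support_nil, List.mem_singleton] at hzi hzj
    subst hzi
    exact hij (e.injective (Subtype.ext hzj))

lemma sep_transfer {G : SimpleGraph V} {x y : V} (hxy : G.Adj x y) {A C X : Set V}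
    (hX : Sep G A C X) (hx : x ∈ X) (hy : y ∈ X) {Z : Set V}
    (hZ : Sep (G.deleteEdges {s(x, y)}) A X Z) : Sep G A C Z := by
  intro u v hu hv p
  obtain ⟨z0, hz0X, hz0s⟩ := hX hu hv p
  obtain ⟨w, hwX, Q, hsub, honce, -⟩ := exists_prefix p X ⟨z0, hz0s, hz0X⟩
  have hQe : ∀ e ∈ Q.edges, e ∉ ({s(x, y)} : Set (Sym2 V)) := by
    intro e he hmem
    rw [Set.mem_singleton_iff] at hmem
    subst hmem
    have h1 := honce x (Q.fst_mem_support_of_mem_edges he) hx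
    have h2 := honce y (Q.snd_mem_support_of_mem_edges he) hy
    exact hxy.ne (h1.trans h2.symm)
  obtain ⟨z, hzZ, hzs⟩ := hZ hu hwX (Q.toDeleteEdges _ hQe)
  rw [Walk.support_transfer] at hzs
  exact ⟨z, hzZ, hsub z hzs⟩

/-- Glue together `A`–`X` and `B`–`X` path systems along a minimum separator `X`. -/
lemma glue {G H : SimpleGraph V} (hL : H ≤ G) {A B X : Set V} {k : ℕ}
    (hXsep : Sep G A B X) (hXk : X.ncard = k)
    (hA : Conn H A X k) (hB : Conn H B X k) : Conn G A B k := by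
  obtain ⟨fA, hfA1, hfA2⟩ := hA
  obtain ⟨fB, hfB1, hfB2⟩ := hB
  have HA : ∀ i, ∃ w, w ∈ X ∧ ∃ Q : H.Walk (fA i).1 w,
      (∀ z ∈ Q.support, z ∈ (fA i).2.2.support) ∧
      (∀ z ∈ Q.support, z ∈ X → z = w) ∧ Q.IsPath := by
    intro i
    obtain ⟨w, hw, Q, h1, h2, h3⟩ := exists_prefix (fA i).2.2 X
      ⟨(fA i).2.1, Walk.end_mem_support _, (hfA1 i).2.2⟩
    exact ⟨w, hw, Q, h1, h2, h3 (hfA1 i).1⟩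
  choose wA hwA QA hQA1 hQA2 hQA3 using HA
  have HB : ∀ j, ∃ w, w ∈ X ∧ ∃ Q : H.Walk (fB j).1 w,
      (∀ z ∈ Q.support, z ∈ (fB j).2.2.support) ∧
      (∀ z ∈ Q.support, z ∈ X → z = w) ∧ Q.IsPath := by
    intro j
    obtain ⟨w, hw, Q, h1, h2, h3⟩ := exists_prefix (fB j).2.2 X
      ⟨(fB j).2.1, Walk.end_mem_support _, (hfB1 j).2.2⟩
    exact ⟨w, hw, Q, h1, h2, h3 (hfB1 j).1⟩
  choose wB hwB QB hQB1 hQB2 hQB3 using HB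
  haveI : Fintype X := (Set.toFinite X).fintype
  have hcX : Fintype.card X = k := by
    rw [← Set.toFinset_card, ← Set.ncard_eq_toFinset_card', hXk]
  have hwAinj : Function.Injective fun i => (⟨wA i, hwA i⟩ : X) := by
    intro i j hij
    by_contra hne
    have h1 : wA i ∈ (fA i).2.2.support := hQA1 i _ (Walk.end_mem_support _)
    have h2 : wA i ∈ (fA j).2.2.support := by
      have : wA i = wA j := congrArg Subtype.val hij
      rw [this]
      exact hQA1 j _ (Walk.end_mem_support _)
    exact hfA2 i j hne _ h1 h2
  have hwBinj : Function.Injective fun j => (⟨wB j, hwB j⟩ : X) := by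
    intro i j hij
    by_contra hne
    have h1 : wB i ∈ (fB i).2.2.support := hQB1 i _ (Walk.end_mem_support _)
    have h2 : wB i ∈ (fB j).2.2.support := by
      have : wB i = wB j := congrArg Subtype.val hij
      rw [this]
      exact hQB1 j _ (Walk.end_mem_support _)
    exact hfB2 i j hne _ h1 h2
  let eA := Equiv.ofBijective _ ((Fintype.bijective_iff_injective_and_card
    (fun i => (⟨wA i, hwA i⟩ : X))).2 ⟨hwAinj, by rw [Fintype.card_fin, hcX]⟩)
  let eB := Equiv.ofBijective _ ((Fintype.bijective_iff_injective_and_card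
    (fun j => (⟨wB j, hwB j⟩ : X))).2 ⟨hwBinj, by rw [Fintype.card_fin, hcX]⟩)
  set σ : Fin k → Fin k := fun i => eB.symm (eA i) with hσ
  have hσinj : Function.Injective σ := fun i j h => eA.injective (eB.symm.injective h)
  have hend : ∀ i, wB (σ i) = wA i := by
    intro i
    have := eB.apply_symm_apply (eA i)
    exact congrArg Subtype.val this
  have cross : ∀ i j z, z ∈ (QA i).support → z ∈ (QB j).support → z ∈ X := by
    intro i j z hzi hzj
    by_contra hzX
    obtain ⟨q1, hq1sub, hq1av⟩ := exists_avoid (QA i) (hQA3 i) X (hQA2 i) hzi hzX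
    obtain ⟨q2, hq2sub, hq2av⟩ := exists_avoid (QB j) (hQB3 j) X (hQB2 j) hzj hzX
    obtain ⟨t, htX, hts⟩ := hXsep (hfA1 i).2.1 (hfB1 j).2.1
      ((q1.append q2.reverse).transfer G
        (fun e he => (SimpleGraph.edgeSet_mono hL) (Walk.edges_subset_edgeSet _ he)))
    rw [Walk.support_transfer, Walk.mem_support_append_iff] at hts
    rcases hts with h | h
    · exact hq1av t h htX
    · rw [Walk.support_reverse, List.mem_reverse] at h
      exact hq2av t h htX
  let W : ∀ i : Fin k, G.Walk (fA i).1 (fB (σ i)).1 := fun i =>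
    ((QA i).append (((QB (σ i)).reverse).copy (by rw [hend i]) rfl)).transfer G
      (fun e he => (SimpleGraph.edgeSet_mono hL) (Walk.edges_subset_edgeSet _ he))
  refine ⟨fun i => ⟨(fA i).1, (fB (σ i)).1, (W i).bypass⟩, fun i => ?_, ?_⟩
  · exact ⟨Walk.bypass_isPath _, (hfA1 i).2.1, (hfB1 (σ i)).2.1⟩
  · intro i j hij z hzi hzj
    have hWsup : ∀ i z, z ∈ (W i).bypass.support →
        z ∈ (QA i).support ∨ z ∈ (QB (σ i)).support := by
      intro i z hz
      have h := Walk.support_bypass_subset _ hz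
      simp only [W] at h
      rw [Walk.support_transfer, Walk.mem_support_append_iff] at h
      rcases h with h | h
      · exact Or.inl h
      · rw [Walk.support_copy, Walk.support_reverse, List.mem_reverse] at h
        exact Or.inr h
    have hzi' := hWsup i z hzi
    have hzj' := hWsup j z hzj
    have hAB : ∀ i' j', z ∈ (QA i').support → z ∈ (QB (σ j')).support → i' = j' := by
      intro i' j' h1 h2
      have hzX := cross i' (σ j') z h1 h2
      have e1 : z = wA i' := hQA2 i' z h1 hzX
      have e2 : z = wB (σ j') := hQB2 (σ j') z h2 hzX
      have : wA i' = wA j' := by rw [← e1, e2, hend j']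
      exact hwAinj (Subtype.ext this)
    rcases hzi' with h1 | h1 <;> rcases hzj' with h2 | h2
    · exact hfA2 i j hij z (hQA1 i z h1) (hQA1 j z h2)
    · exact hij (hAB i j h1 h2)
    · exact hij ((hAB j i h2 h1).symm)
    · exact hfB2 (σ i) (σ j) (fun h => hij (hσinj h)) z (hQB1 _ z h1) (hQB1 _ z h2)


theorem menger_aux (k : ℕ) : ∀ (n : ℕ) (G : SimpleGraph V) (A B : Set V), m G ≤ n →
    (∀ X : Set V, Sep G A B X → k ≤ X.ncard) → Conn G A B k := by
  intro n
  induction n with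
  | zero =>
    intro G A B hm hk
    refine conn_of_no_edges (fun a b hab => ?_) hk
    have h1 : (a, b) ∈ Finset.univ.filter fun p : V × V => G.Adj p.1 p.2 := by simp [hab]
    have h2 := Finset.card_pos.2 ⟨_, h1⟩
    have : m G = 0 := Nat.le_zero.1 hm
    rw [m] at this
    omega
  | succ n IH =>
    intro G A B hm hk
    by_cases hE : ∃ a b : V, G.Adj a b
    swap
    · push_neg at hE; exact conn_of_no_edges hE hk
    obtain ⟨x, y, hxy⟩ := hE
    by_cases hZ : ∃ Z : Set V, Sep (contract G x y) (g x y '' A) (g x y '' B) Z ∧ Z.ncard < k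
    · obtain ⟨Z, hZsep, hZcard⟩ := hZ
      have hxZ : x ∈ Z := by
        by_contra hxZ
        have hsep : Sep G A B Z := by
          intro u v hu hv p
          obtain ⟨Q, hQ⟩ := project hxy.ne p
          obtain ⟨z, hzZ, hzs⟩ := hZsep ⟨u, hu, rfl⟩ ⟨v, hv, rfl⟩ Q
          obtain ⟨t, hts, hgt⟩ := hQ z hzs
          rcases g_eq_iff.1 hgt with ⟨h1, _⟩ | ⟨_, h2⟩
          · exact ⟨z, hzZ, h1 ▸ hts⟩
          · rw [← h2] at hxZ; exact absurd hzZ hxZ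
        have := hk Z hsep
        omega
      have hXsep : Sep G A B (Z ∪ {y}) := by
        intro u v hu hv p
        obtain ⟨Q, hQ⟩ := project hxy.ne p
        obtain ⟨z, hzZ, hzs⟩ := hZsep ⟨u, hu, rfl⟩ ⟨v, hv, rfl⟩ Q
        obtain ⟨t, hts, hgt⟩ := hQ z hzs
        rcases g_eq_iff.1 hgt with ⟨h1, _⟩ | ⟨h1, _⟩
        · exact ⟨t, Or.inl (h1 ▸ hzZ), hts⟩
        · exact ⟨t, Or.inr (by simp [h1]), hts⟩
      have hXk : (Z ∪ {y}).ncard = k := by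
        have h1 := hk _ hXsep
        have h2 : (Z ∪ {y}).ncard ≤ Z.ncard + 1 := by
          have := Set.ncard_union_le Z {y}
          simpa using this
        omega
      have hmd : m (G.deleteEdges {s(x, y)}) ≤ n := by
        have := m_deleteEdges_lt hxy
        omega
      have hCA : Conn (G.deleteEdges {s(x, y)}) A (Z ∪ {y}) k :=
        IH _ A _ hmd (fun Z' hZ' =>
          hk Z' (sep_transfer hxy hXsep (Or.inl hxZ) (Or.inr rfl) hZ'))
      have hCB : Conn (G.deleteEdges {s(x, y)}) B (Z ∪ {y}) k :=
        IH _ B _ hmd (fun Z' hZ' =>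
          (hk Z' (sep_transfer hxy hXsep.symm (Or.inl hxZ) (Or.inr rfl) hZ').symm))
      exact glue (SimpleGraph.deleteEdges_le _) hXsep hXk hCA hCB
    · push_neg at hZ
      have hc : Conn (contract G x y) (g x y '' A) (g x y '' B) k := by
        apply IH _ _ _ (by have := m_contract_lt hxy; omega)
        intro X hX
        exact hZ X hX
      obtain ⟨f', hf'1, hf'2⟩ := hc
      have H : ∀ i : Fin k, ∃ (a₁ b₁ : V) (q : G.Walk a₁ b₁), a₁ ∈ A ∧ b₁ ∈ B ∧
          ∀ z ∈ q.support, g x y z ∈ (f' i).2.2.support := by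
        intro i
        obtain ⟨hpath, haA, hbB⟩ := hf'1 i
        obtain ⟨a₀, ha₀A, hga₀⟩ := haA
        obtain ⟨b', hgb', q, hq⟩ := lift hxy (f' i).2.2 a₀ hga₀
        obtain ⟨b₀, hb₀B, hgb₀⟩ := hbB
        by_cases hbB' : b' ∈ B
        · exact ⟨a₀, b', q, ha₀A, hbB', hq⟩
        · have hne : b' ≠ b₀ := fun h => hbB' (h ▸ hb₀B)
          have hcase := preimage_cases hxy.ne hne (by rw [hgb', hgb₀])
          have hadj : G.Adj b' b₀ := by
            rcases hcase with ⟨h1, h2⟩ | ⟨h1, h2⟩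
            · subst h1; subst h2; exact hxy
            · subst h1; subst h2; exact hxy.symm
          refine ⟨a₀, b₀, q.concat hadj, ha₀A, hb₀B, ?_⟩
          intro z hz
          rw [Walk.support_concat] at hz
          rcases (by simpa [List.concat_eq_append] using hz : z ∈ q.support ∨ z = b₀) with hz' | hz'
          · exact hq z hz'
          · subst hz'
            rw [hgb₀]
            exact Walk.end_mem_support _
      choose a₁ b₁ q hqA hqB hsup using H
      refine ⟨fun i => ⟨a₁ i, b₁ i, (q i).bypass⟩, fun i => ?_, ?_⟩
      · exact ⟨Walk.bypass_isPath _, hqA i, hqB i⟩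
      · intro i j hij z hzi hzj
        have h1 := hsup i z (Walk.support_bypass_subset _ hzi)
        have h2 := hsup j z (Walk.support_bypass_subset _ hzj)
        exact hf'2 i j hij _ h1 h2

/-- Menger's theorem, hard direction, set version. -/
theorem menger (G : SimpleGraph V) (A B : Set V) (k : ℕ)
    (hk : ∀ X : Set V, Sep G A B X → k ≤ X.ncard) : Conn G A B k :=
  menger_aux k (m G) G A B le_rfl hk


lemma walk_in_set {G : SimpleGraph V} {C : Set V} (hconn : (G.induce C).Connected)
    {a b : V} (ha : a ∈ C) (hb : b ∈ C) :
    ∃ p : G.Walk a b, ∀ z ∈ p.support, z ∈ C := by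
  obtain ⟨w⟩ := hconn.preconnected ⟨a, ha⟩ ⟨b, hb⟩
  refine ⟨w.map (SimpleGraph.Embedding.induce C).toHom, ?_⟩
  intro z hz
  replace hz : z ∈ (w.map (SimpleGraph.Embedding.induce C).toHom).support := hz
  rw [Walk.support_map] at hz
  obtain ⟨⟨z', hz'⟩, _, rfl⟩ := List.mem_map.1 hz
  exact hz'

end MengerAux

theorem stmt_2 [Fintype V] (G : SimpleGraph V) (B : Set (Set V)) (S T : Set V) (ℓ : ℕ)
    (hB : IsBramble G B)
    (hS : ℓ ≤ brambleOrder (sub B S)) (hT : ℓ ≤ brambleOrder (sub B T)) :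
    ∃ f : Fin ℓ → Σ u v, G.Walk u v,
      (∀ i, (f i).2.2.IsPath ∧ (f i).1 ∈ S ∧ (f i).2.1 ∈ T) ∧
      ∀ i j, i ≠ j → ∀ x ∈ (f i).2.2.support, x ∉ (f j).2.2.support := by
  apply MengerAux.menger G S T ℓ
  intro X hX
  by_contra hcard
  push_neg at hcard
  have hmiss : ∀ (W : Set V), ℓ ≤ brambleOrder (sub B W) →
      ∃ C ∈ B, (C ∩ W).Nonempty ∧ C ∩ X = ∅ := by
    intro W hW
    by_contra hhit
    push_neg at hhit
    have hits : HitsAll (sub B W) X := by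
      intro C hC
      rcases hC with ⟨hCB, hCW⟩
      exact hhit C hCB hCW
    have hle : brambleOrder (sub B W) ≤ X.ncard :=
      Nat.sInf_le ⟨X, Set.toFinite X, rfl, hits⟩
    omega
  obtain ⟨C, hCB, ⟨s, hsC, hsS⟩, hCX⟩ := hmiss S hS
  obtain ⟨D, hDB, ⟨t, htD, htT⟩, hDX⟩ := hmiss T hT
  have hCconn := (hB.1 C hCB).2
  have hDconn := (hB.1 D hDB).2
  have hnotin : ∀ z, z ∈ C ∪ D → z ∉ X := by
    rintro z (hz | hz) hzX
    · exact Set.eq_empty_iff_forall_notMem.1 hCX z ⟨hz, hzX⟩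
    · exact Set.eq_empty_iff_forall_notMem.1 hDX z ⟨hz, hzX⟩
  have hwalk : ∃ p : G.Walk s t, ∀ z ∈ p.support, z ∈ C ∪ D := by
    rcases hB.2 C hCB D hDB with ⟨z, hzC, hzD⟩ | ⟨u, huC, v, hvD, huv⟩
    · obtain ⟨p1, hp1⟩ := MengerAux.walk_in_set hCconn hsC hzC
      obtain ⟨p2, hp2⟩ := MengerAux.walk_in_set hDconn hzD htD
      refine ⟨p1.append p2, ?_⟩
      intro w hw
      rcases Walk.mem_support_append_iff _ _ |>.1 hw with h | h
      · exact Or.inl (hp1 w h)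
      · exact Or.inr (hp2 w h)
    · obtain ⟨p1, hp1⟩ := MengerAux.walk_in_set hCconn hsC huC
      obtain ⟨p2, hp2⟩ := MengerAux.walk_in_set hDconn hvD htD
      refine ⟨p1.append (Walk.cons huv p2), ?_⟩
      intro w hw
      rcases Walk.mem_support_append_iff _ _ |>.1 hw with h | h
      · exact Or.inl (hp1 w h)
      · rcases MengerAux.mem_support_cons _ _ |>.1 h with rfl | h'
        · exact Or.inl huC
        · exact Or.inr (hp2 w h')
  obtain ⟨p, hp⟩ := hwalk
  obtain ⟨z, hzX, hzs⟩ := hX hsS htT p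
  exact hnotin z (hp z hzs) hzX
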